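/- For k∈ℕ set l_k := (3/2)^{k/2}, s_k := ⌊l_k^{1/3}⌋ and δ_k := (1/8)·√(l_k) − 2, and let 𝔽_k be the set of all rectangles Λ⊂ℤ² (sets of the form ([a₁,b₁]×[a₂,b₂])∩ℤ²) which, modulo translations and permutation of the two coordinates, are contained in [0,l_{k+1}]×[0,l_{k+2}]. Then for every k≥1 and every Λ∈𝔽_k∖𝔽_{k−1} there exists a finite sequence {(Λ₁^{(i)},Λ₂^{(i)})}_{i=1}^{s_k} of pairs of rectangles in 𝔽_{k−1} such that: (i) Λ = Λ₁^{(i)} ∪ Λ₂^{(i)} for every i; (ii) d(Λ∖Λ₁^{(i)}, Λ∖Λ₂^{(i)}) ≥ δ_k for every i; (iii) (Λ₁^{(i)}∩Λ₂^{(i)}) ∩ (Λ₁^{(j)}∩Λ₂^{(j)}) = ∅ whenever i≠j. -/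
import Mathlib


noncomputable section

/-- The length scale `l_k = (3/2)^{k/2}`. -/
def lk (k : ℕ) : ℝ := (3 / 2 : ℝ) ^ ((k : ℝ) / 2)

/-- `s_k = ⌊l_k^{1/3}⌋`. -/
def sk (k : ℕ) : ℕ := ⌊(lk k) ^ ((1 : ℝ) / 3)⌋₊

/-- `δ_k = (1/8)√(l_k) − 2`. -/
def dk (k : ℕ) : ℝ := (1 / 8) * Real.sqrt (lk k) - 2

/-- The `ℓ¹` (graph) distance on `ℤ²`, as a real number. -/
def dist1 (x y : ℤ × ℤ) : ℝ := ((|x.1 - y.1| + |x.2 - y.2| : ℤ) : ℝ)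

/-- `Λ` belongs to the class `𝔽_k`: it is a rectangle of `ℤ²` which, modulo translations
and permutation of the two coordinates, is contained in `[0, l_{k+1}] × [0, l_{k+2}]`. -/
def memF (k : ℕ) (Λ : Finset (ℤ × ℤ)) : Prop :=
  ∃ a b : ℤ × ℤ, a.1 ≤ b.1 ∧ a.2 ≤ b.2 ∧ Λ = Finset.Icc a b ∧
    ((min (b.1 - a.1) (b.2 - a.2) : ℤ) : ℝ) ≤ lk (k + 1) ∧
    ((max (b.1 - a.1) (b.2 - a.2) : ℤ) : ℝ) ≤ lk (k + 2)

end

noncomputable def tkk (k : ℕ) : ℕ := ⌈Real.sqrt (lk k) / 8 - 3⌉₊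
private lemma lk_nonneg (k : ℕ) : 0 ≤ lk k := Real.rpow_nonneg (by norm_num) _

private lemma one_le_lk (k : ℕ) : 1 ≤ lk k := by
  have h := Real.rpow_le_rpow_of_exponent_le (by norm_num : (1:ℝ) ≤ 3/2)
    (by positivity : (0:ℝ) ≤ (k:ℝ)/2)
  simpa [lk, Real.rpow_zero] using h

private lemma lk_le_succ (k : ℕ) : lk k ≤ lk (k+1) := by
  apply Real.rpow_le_rpow_of_exponent_le (by norm_num)
  push_cast; linarith

private lemma lk_add_two (k : ℕ) : lk (k+2) = 3/2 * lk k := by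
  have h : ((k:ℝ)+2)/2 = (k:ℝ)/2 + 1 := by ring
  rw [lk, lk]; push_cast
  rw [h, Real.rpow_add (by norm_num : (0:ℝ) < 3/2), Real.rpow_one]; ring

private lemma key (k : ℕ) (n : ℤ) (hn1 : lk k < (n:ℝ)) (hn2 : (n:ℝ) ≤ 3/2 * lk k) :
    max 0 (n + (tkk k : ℤ) - 1 - ⌊lk k⌋) + ((sk k : ℤ) - 1) * ((tkk k : ℤ) + 1) ≤ ⌊lk k⌋ := by
  have hL0 : 0 ≤ lk k := lk_nonneg k
  have hL1 : 1 ≤ lk k := one_le_lk k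
  set L := lk k with hLdef
  set y := L ^ ((1:ℝ)/3) with hy
  have hy0 : 0 ≤ y := Real.rpow_nonneg hL0 _
  have hy3 : y ^ 3 = L := by
    rw [hy, ← Real.rpow_natCast (L ^ ((1:ℝ)/3)) 3, ← Real.rpow_mul hL0]
    norm_num
  have hy1 : 1 ≤ y := by
    have h13 : (1:ℝ)^3 ≤ y^3 := by rw [hy3]; simpa using hL1
    exact (pow_le_pow_iff_left₀ (by norm_num) hy0 (by norm_num)).mp h13
  have hyL : y ≤ L := by
    have hL2 : 1 ≤ L^2 := one_le_pow₀ hL1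
    have h13 : y^3 ≤ L^3 := by rw [hy3]; nlinarith [mul_nonneg hL0 (sub_nonneg.mpr hL2)]
    exact (pow_le_pow_iff_left₀ hy0 hL0 (by norm_num)).mp h13
  set z := Real.sqrt L with hz
  have hz2 : z ^ 2 = L := Real.sq_sqrt hL0
  have hz0 : 0 ≤ z := Real.sqrt_nonneg L
  have hyz : y ≤ z := by
    rw [hy, hz, Real.sqrt_eq_rpow]
    exact Real.rpow_le_rpow_of_exponent_le hL1 (by norm_num)
  have hs_le : (sk k : ℝ) ≤ y := Nat.floor_le hy0
  have hfl_le : ((⌊L⌋ : ℤ) : ℝ) ≤ L := Int.floor_le L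
  have hfl_gt : L - 1 < ((⌊L⌋ : ℤ) : ℝ) := Int.sub_one_lt_floor L
  have hs_half : (sk k : ℝ) ≤ L/2 + 1 := by
    rcases le_total L 2 with h | h
    · linarith
    · rcases le_total L 8 with h8 | h8
      · have hy2 : y ≤ 2 := by
          have h13 : y^3 ≤ 2^3 := by rw [hy3]; norm_num; linarith
          exact (pow_le_pow_iff_left₀ hy0 (by norm_num) (by norm_num)).mp h13
        linarith
      · have h2y : 2 ≤ y := by
          have h13 : (2:ℝ)^3 ≤ y^3 := by rw [hy3]; norm_num; linarith
          exact (pow_le_pow_iff_left₀ (by norm_num) hy0 (by norm_num)).mp h13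
        have : 2*y ≤ y^3 := by nlinarith
        linarith
  have ht_cases : (tkk k : ℝ) = 0 ∨ ((tkk k : ℝ) < z / 8 - 2 ∧ 24 < z) := by
    rcases Nat.eq_zero_or_pos (tkk k) with h | h
    · left; rw [h]; norm_num
    · right
      have hx : 0 < z / 8 - 3 := by
        by_contra h'
        push_neg at h'
        have h0 : tkk k = 0 := Nat.ceil_eq_zero.mpr h'
        omega
      constructor
      · have h' : (⌈z/8 - 3⌉₊ : ℝ) < (z/8 - 3) + 1 := Nat.ceil_lt_add_one (le_of_lt hx)
        have ht : (tkk k : ℝ) < (z/8 - 3) + 1 := h'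
        linarith
      · linarith
  have htnn : (0:ℝ) ≤ (tkk k : ℝ) := Nat.cast_nonneg _
  have hsnn : (0:ℝ) ≤ (sk k : ℝ) := Nat.cast_nonneg _
  rw [← max_add_add_right]
  apply max_le
  · rw [← Int.lt_add_one_iff, ← @Int.cast_lt ℝ]
    push_cast
    rcases ht_cases with h | ⟨h1, h2⟩
    · rw [h]; linarith
    · have hL576 : 576 < L := by nlinarith
      have hA : (sk k:ℝ) * ((tkk k:ℝ)+1) ≤ y * (z/8) :=
        mul_le_mul hs_le (by linarith) (by positivity) hy0
      have hB : y * (z/8) ≤ L/8 := by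
        nlinarith [mul_nonneg hz0 (sub_nonneg.mpr hyz), hz2]
      linarith [hA, hB]
  · rw [← Int.lt_add_one_iff, ← @Int.cast_lt ℝ]
    push_cast
    rcases ht_cases with h | ⟨h1, h2⟩
    · rw [h]; linarith
    · have hL576 : 576 < L := by nlinarith
      have hA : (sk k:ℝ) * ((tkk k:ℝ)+1) ≤ y * (z/8) :=
        mul_le_mul hs_le (by linarith) (by positivity) hy0
      have hB : y * (z/8) ≤ L/8 := by
        nlinarith [mul_nonneg hz0 (sub_nonneg.mpr hyz), hz2]
      linarith [hA, hB]
private lemma core (k : ℕ) (hk : 1 ≤ k) (a b : ℤ × ℤ) (h1 : a.1 ≤ b.1) (h2 : a.2 ≤ b.2)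
    (hgt : lk k < ((b.1 - a.1 : ℤ) : ℝ))
    (hle : ((b.1 - a.1 : ℤ) : ℝ) ≤ lk (k + 2))
    (hm : ((b.2 - a.2 : ℤ) : ℝ) ≤ lk (k + 1)) :
    ∃ Λ₁ Λ₂ : Fin (sk k) → Finset (ℤ × ℤ),
      (∀ i, memF (k - 1) (Λ₁ i)) ∧ (∀ i, memF (k - 1) (Λ₂ i)) ∧
      (∀ i, Finset.Icc a b = Λ₁ i ∪ Λ₂ i) ∧
      (∀ i, ∀ x ∈ Finset.Icc a b \ Λ₁ i, ∀ y ∈ Finset.Icc a b \ Λ₂ i, dk k ≤ dist1 x y) ∧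
      (∀ i j, i ≠ j → (Λ₁ i ∩ Λ₂ i) ∩ (Λ₁ j ∩ Λ₂ j) = ∅) := by
  have e1 : k - 1 + 1 = k := by omega
  have e2 : k - 1 + 2 = k + 1 := by omega
  have hkey := key k (b.1 - a.1) hgt (by rw [← lk_add_two]; exact hle)
  set t : ℤ := (tkk k : ℤ) with htdef
  have ht0 : 0 ≤ t := Int.natCast_nonneg _
  set fl : ℤ := ⌊lk k⌋ with hfldef
  set n : ℤ := b.1 - a.1 with hndef
  set A : ℤ := max 0 (n + t - 1 - fl) with hAdef
  set u : Fin (sk k) → ℤ := fun i => A + (i : ℤ) * (t + 1) with hudef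
  have hA0 : 0 ≤ A := le_max_left _ _
  have hAu : ∀ i, A ≤ u i := by
    intro i
    have : (0:ℤ) ≤ (i : ℤ) * (t + 1) := mul_nonneg (Int.natCast_nonneg _) (by linarith)
    simp only [hudef]; linarith
  have hu0 : ∀ i, 0 ≤ u i := fun i => le_trans hA0 (hAu i)
  have huf : ∀ i, u i ≤ fl := by
    intro i
    have hi : (i : ℤ) ≤ (sk k : ℤ) - 1 := by
      have := i.isLt; omega
    have h' : (i:ℤ) * (t+1) ≤ ((sk k:ℤ)-1) * (t+1) := mul_le_mul_of_nonneg_right hi (by linarith)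
    have : u i ≤ A + ((sk k:ℤ)-1)*(t+1) := by simp only [hudef]; linarith
    exact le_trans this hkey
  have hfl_le : ((fl:ℤ):ℝ) ≤ lk k := Int.floor_le _
  have hfl_lt_n : fl < n := by
    have : ((fl:ℤ):ℝ) < (n:ℝ) := lt_of_le_of_lt hfl_le hgt
    exact_mod_cast this
  have hAlow : n + t - 1 - fl ≤ A := le_max_right _ _
  have hlow : ∀ i, n - fl ≤ u i + 1 - t := by
    intro i; have := hAu i; omega
  have hside1 : ∀ i, ((u i : ℤ):ℝ) ≤ lk k := by
    intro i
    refine le_trans ?_ hfl_le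
    exact_mod_cast huf i
  have hside2 : ∀ i, ((b.1 - (a.1 + u i + 1 - t) : ℤ):ℝ) ≤ lk k := by
    intro i
    have h' : b.1 - (a.1 + u i + 1 - t) ≤ fl := by have := hlow i; omega
    refine le_trans ?_ hfl_le
    exact_mod_cast h'
  refine ⟨fun i => Finset.Icc a (a.1 + u i, b.2), fun i => Finset.Icc (a.1 + u i + 1 - t, a.2) b,
    ?_, ?_, ?_, ?_, ?_⟩
  · -- memF for left pieces
    intro i
    refine ⟨a, (a.1 + u i, b.2), by simpa using hu0 i, h2, rfl, ?_, ?_⟩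
    · rw [e1]
      have hmin : min ((a.1 + u i) - a.1) (b.2 - a.2) ≤ u i := by
        have := min_le_left ((a.1 + u i) - a.1) (b.2 - a.2); omega
      exact le_trans (by exact_mod_cast hmin) (hside1 i)
    · rw [e2]
      have hx : ((a.1 + u i) - a.1 : ℤ) = u i := by ring
      rw [hx, Int.cast_max]
      exact max_le (le_trans (hside1 i) (lk_le_succ k)) hm
  · -- memF for right pieces
    intro i
    refine ⟨(a.1 + u i + 1 - t, a.2), b, ?_, h2, rfl, ?_, ?_⟩
    · show a.1 + u i + 1 - t ≤ b.1
      have := huf i; omega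
    · rw [e1]
      have hmin : min (b.1 - (a.1 + u i + 1 - t)) (b.2 - a.2) ≤ b.1 - (a.1 + u i + 1 - t) :=
        min_le_left _ _
      exact le_trans (by exact_mod_cast hmin) (hside2 i)
    · rw [e2, Int.cast_max]
      exact max_le (le_trans (hside2 i) (lk_le_succ k)) hm
  · -- union
    intro i
    have hu1 := hu0 i
    have hu2 := huf i
    have hl := hlow i
    ext z
    simp only [Finset.mem_Icc, Finset.mem_union, Prod.le_def]
    constructor
    · rintro ⟨⟨ha1, ha2⟩, ⟨hb1, hb2⟩⟩
      rcases le_or_gt z.1 (a.1 + u i) with h | h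
      · exact Or.inl ⟨⟨ha1, ha2⟩, ⟨h, hb2⟩⟩
      · exact Or.inr ⟨⟨by omega, ha2⟩, ⟨hb1, hb2⟩⟩
    · rintro (⟨⟨ha1, ha2⟩, ⟨hb1, hb2⟩⟩ | ⟨⟨ha1, ha2⟩, ⟨hb1, hb2⟩⟩)
      · exact ⟨⟨ha1, ha2⟩, ⟨by omega, hb2⟩⟩
      · exact ⟨⟨by omega, ha2⟩, ⟨hb1, hb2⟩⟩
  · -- distance
    intro i x hx y hy
    obtain ⟨hx1, hx2⟩ := Finset.mem_sdiff.mp hx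
    obtain ⟨hy1, hy2⟩ := Finset.mem_sdiff.mp hy
    rw [Finset.mem_Icc] at hx1 hy1
    obtain ⟨⟨hxa1, hxa2⟩, ⟨hxb1, hxb2⟩⟩ : (a.1 ≤ x.1 ∧ a.2 ≤ x.2) ∧ (x.1 ≤ b.1 ∧ x.2 ≤ b.2) :=
      ⟨hx1.1, hx1.2⟩
    obtain ⟨⟨hya1, hya2⟩, ⟨hyb1, hyb2⟩⟩ : (a.1 ≤ y.1 ∧ a.2 ≤ y.2) ∧ (y.1 ≤ b.1 ∧ y.2 ≤ b.2) :=
      ⟨hy1.1, hy1.2⟩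
    have hxgt : a.1 + u i < x.1 := by
      by_contra h
      push_neg at h
      exact hx2 (Finset.mem_Icc.mpr ⟨⟨hxa1, hxa2⟩, ⟨h, hxb2⟩⟩)
    have hylt : y.1 < a.1 + u i + 1 - t := by
      by_contra h
      push_neg at h
      exact hy2 (Finset.mem_Icc.mpr ⟨⟨h, hya2⟩, ⟨hyb1, hyb2⟩⟩)
    have hZ : t + 1 ≤ |x.1 - y.1| + |x.2 - y.2| := by
      have h1 : t + 1 ≤ x.1 - y.1 := by omega
      have h2 := le_abs_self (x.1 - y.1)
      have h3 := abs_nonneg (x.2 - y.2)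
      linarith
    have ht_ge : Real.sqrt (lk k) / 8 - 3 ≤ (tkk k : ℝ) := Nat.le_ceil _
    have hcast : ((t + 1 : ℤ) : ℝ) ≤ dist1 x y := by
      rw [dist1]
      exact_mod_cast hZ
    have : dk k ≤ ((t + 1 : ℤ) : ℝ) := by
      rw [dk, htdef]
      push_cast
      linarith
    linarith
  · -- disjoint overlaps
    intro i j hij
    have key2 : ∀ p q : Fin (sk k), (p:ℕ) < (q:ℕ) → u p + (t+1) ≤ u q := by
      intro p q hpq
      have hpq' : (p:ℤ) + 1 ≤ (q:ℤ) := by exact_mod_cast hpq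
      have h' : ((p:ℤ)+1) * (t+1) ≤ (q:ℤ) * (t+1) := mul_le_mul_of_nonneg_right hpq' (by linarith)
      have hexp : ((p:ℤ)+1)*(t+1) = (p:ℤ)*(t+1) + (t+1) := by ring
      simp only [hudef]; linarith
    have hne : (i:ℕ) ≠ (j:ℕ) := fun h => hij (Fin.ext h)
    have hd : u i + (t+1) ≤ u j ∨ u j + (t+1) ≤ u i := by
      rcases Nat.lt_or_ge (i:ℕ) (j:ℕ) with h | h
      · exact Or.inl (key2 i j h)
      · exact Or.inr (key2 j i (by omega))
    rw [Finset.eq_empty_iff_forall_notMem]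
    intro z hz
    simp only [Finset.mem_inter, Finset.mem_Icc, Prod.le_def] at hz
    obtain ⟨⟨⟨-, ⟨hz1, -⟩⟩, ⟨⟨hz2, -⟩, -⟩⟩, ⟨⟨-, ⟨hz3, -⟩⟩, ⟨⟨hz4, -⟩, -⟩⟩⟩ := hz
    omega
private lemma swap_Icc (p q : ℤ × ℤ) :
    (Finset.Icc p q).image Prod.swap = Finset.Icc p.swap q.swap := by
  ext z
  simp only [Finset.mem_image, Finset.mem_Icc, Prod.le_def, Prod.fst_swap, Prod.snd_swap]
  constructor
  · rintro ⟨w, ⟨⟨ha1, ha2⟩, ⟨hb1, hb2⟩⟩, rfl⟩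
    simp only [Prod.fst_swap, Prod.snd_swap]
    exact ⟨⟨ha2, ha1⟩, ⟨hb2, hb1⟩⟩
  · rintro ⟨⟨ha1, ha2⟩, ⟨hb1, hb2⟩⟩
    exact ⟨z.swap, ⟨⟨by simpa using ha2, by simpa using ha1⟩,
      ⟨by simpa using hb2, by simpa using hb1⟩⟩, Prod.swap_swap z⟩

private lemma memF_swap {m : ℕ} {S : Finset (ℤ × ℤ)} (h : memF m S) :
    memF m (S.image Prod.swap) := by
  obtain ⟨p, q, hp1, hp2, rfl, hmin, hmax⟩ := h
  refine ⟨p.swap, q.swap, hp2, hp1, swap_Icc p q, ?_, ?_⟩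
  · simpa [Prod.fst_swap, Prod.snd_swap, min_comm] using hmin
  · simpa [Prod.fst_swap, Prod.snd_swap, max_comm] using hmax

private lemma dist1_swap (x y : ℤ × ℤ) : dist1 x.swap y.swap = dist1 x y := by
  rw [dist1, dist1]
  push_cast
  simp only [Prod.fst_swap, Prod.snd_swap]
  ring


/-- Every rectangle `Λ ∈ 𝔽_k ∖ 𝔽_{k−1}` can be written, in `s_k`
different ways, as a slightly overlapping union `Λ = Λ₁ ∪ Λ₂` of two rectangles of
`𝔽_{k−1}` with `d(Λ∖Λ₁, Λ∖Λ₂) ≥ δ_k`, the `s_k` overlaps `Λ₁ ∩ Λ₂` being pairwise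
disjoint. -/
theorem bisection_lemma (k : ℕ) (hk : 1 ≤ k) (Λ : Finset (ℤ × ℤ))
    (hΛ : memF k Λ) (hΛ' : ¬ memF (k - 1) Λ) :
    ∃ Λ₁ Λ₂ : Fin (sk k) → Finset (ℤ × ℤ),
      (∀ i, memF (k - 1) (Λ₁ i)) ∧ (∀ i, memF (k - 1) (Λ₂ i)) ∧
      (∀ i, Λ = Λ₁ i ∪ Λ₂ i) ∧
      (∀ i, ∀ x ∈ Λ \ Λ₁ i, ∀ y ∈ Λ \ Λ₂ i, dk k ≤ dist1 x y) ∧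
      (∀ i j, i ≠ j → (Λ₁ i ∩ Λ₂ i) ∩ (Λ₁ j ∩ Λ₂ j) = ∅) := by
  obtain ⟨a, b, hab1, hab2, hEq, hmin, hmax⟩ := hΛ
  subst hEq
  have e1 : k - 1 + 1 = k := by omega
  have e2 : k - 1 + 2 = k + 1 := by omega
  have hmax_gt : lk k < ((max (b.1 - a.1) (b.2 - a.2) : ℤ) : ℝ) := by
    by_contra h
    push_neg at h
    refine hΛ' ⟨a, b, hab1, hab2, rfl, ?_, ?_⟩
    · rw [e1]
      exact le_trans (by exact_mod_cast (min_le_max : min (b.1-a.1) (b.2-a.2) ≤ _)) h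
    · rw [e2]
      exact le_trans h (lk_le_succ k)
  rcases le_total (b.2 - a.2) (b.1 - a.1) with hc | hc
  · have hM : max (b.1 - a.1) (b.2 - a.2) = b.1 - a.1 := max_eq_left hc
    have hm' : min (b.1 - a.1) (b.2 - a.2) = b.2 - a.2 := min_eq_right hc
    rw [hM] at hmax_gt hmax
    rw [hm'] at hmin
    exact core k hk a b hab1 hab2 hmax_gt hmax hmin
  · have hM : max (b.1 - a.1) (b.2 - a.2) = b.2 - a.2 := max_eq_right hc
    have hm' : min (b.1 - a.1) (b.2 - a.2) = b.1 - a.1 := min_eq_left hc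
    rw [hM] at hmax_gt hmax
    rw [hm'] at hmin
    obtain ⟨Λ₁, Λ₂, H1, H2, H3, H4, H5⟩ :=
      core k hk a.swap b.swap hab2 hab1
        (by simpa using hmax_gt) (by simpa using hmax) (by simpa using hmin)
    have hIcc : (Finset.Icc a.swap b.swap).image Prod.swap = Finset.Icc a b := by
      rw [swap_Icc, Prod.swap_swap, Prod.swap_swap]
    refine ⟨fun i => (Λ₁ i).image Prod.swap, fun i => (Λ₂ i).image Prod.swap,
      fun i => memF_swap (H1 i), fun i => memF_swap (H2 i), ?_, ?_, ?_⟩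
    · intro i
      have h := congrArg (Finset.image Prod.swap) (H3 i)
      rw [Finset.image_union, hIcc] at h
      exact h
    · intro i x hx y hy
      have tr : ∀ (S : Finset (ℤ × ℤ)) (w : ℤ × ℤ),
          w ∈ Finset.Icc a b \ S.image Prod.swap →
          w.swap ∈ Finset.Icc a.swap b.swap \ S := by
        intro S w hw
        rw [Finset.mem_sdiff] at hw ⊢
        obtain ⟨hw1, hw2⟩ := hw
        rw [Finset.mem_Icc, Prod.le_def] at hw1
        refine ⟨?_, ?_⟩
        · rw [Finset.mem_Icc, Prod.le_def]
          simp only [Prod.fst_swap, Prod.snd_swap]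
          exact ⟨⟨hw1.1.2, hw1.1.1⟩, ⟨hw1.2.2, hw1.2.1⟩⟩
        · intro hmem
          exact hw2 (Finset.mem_image.mpr ⟨w.swap, hmem, Prod.swap_swap w⟩)
      have := H4 i x.swap (tr _ x hx) y.swap (tr _ y hy)
      rwa [dist1_swap] at this
    · intro i j hij
      rw [← Finset.image_inter _ _ Prod.swap_injective,
        ← Finset.image_inter _ _ Prod.swap_injective,
        ← Finset.image_inter _ _ Prod.swap_injective,
        H5 i j hij, Finset.image_empty]
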